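/- arXiv:1103.1945 — 2 statements merged into one kernel-verified Lean document; each statement's English description precedes it below -/
import Mathlib

section
/- Let μ be a probability measure on ℝ with infinite compact support, with orthonormal polynomials {p_n}, CD kernel K_n, and Jacobi matrix J (the tridiagonal matrix of multiplication by x in the basis {p_n}). For λ ∈ ℝ, let A_λ be the (n+1)×(n+1) matrix obtained from the top-left (n+1)×(n+1) block J_{n+1} of J by adding λ to its bottom-right diagonal entry, and let μ_{n+1,λ} be its spectral measure for the first standard basis vector e_1, i.e. μ_{n+1,λ} = Σ_{j=1}^{n+1} |⟨e_1, v_j⟩|² δ_{x_j} where x_j are the (distinct) eigenvalues of A_λ with orthonormal eigenvectors v_j. Then for each eigenvalue x_j of A_λ, μ_{n+1,λ}({x_j}) = 1 / K_n(x_j, x_j; μ). -/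
open MeasureTheory Polynomial Filter Matrix
open scoped ENNReal Real

/-- The topological support of a measure. -/
def measSupport {α : Type*} [TopologicalSpace α] [MeasurableSpace α] (μ : Measure α) : Set α :=
  {x | ∀ U : Set α, IsOpen U → x ∈ U → μ U ≠ 0}

set_option linter.unusedSectionVars false

lemma stmt8_span (p : ℕ → Polynomial ℝ) (hdeg : ∀ m, (p m).natDegree = m)
    (hl : ∀ m, (p m).leadingCoeff ≠ 0) :
    ∀ m (q : Polynomial ℝ), q.natDegree ≤ m →
      ∃ c : ℕ → ℝ, q = ∑ k ∈ Finset.range (m+1), Polynomial.C (c k) * p k := by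
  intro m
  induction m with
  | zero =>
    intro q hq
    obtain ⟨a, ha⟩ := Polynomial.natDegree_eq_zero.mp (Nat.le_zero.mp hq)
    obtain ⟨b, hb⟩ := Polynomial.natDegree_eq_zero.mp (hdeg 0)
    have hb0 : b ≠ 0 := by
      intro h
      apply hl 0
      rw [← hb, h, map_zero, leadingCoeff_zero]
    refine ⟨fun _ => a / b, ?_⟩
    rw [Finset.sum_range_one, ← ha, ← hb, ← Polynomial.C_mul, div_mul_cancel₀ a hb0]
  | succ m IH =>
    intro q hq
    set d := q.coeff (m+1) / (p (m+1)).leadingCoeff with hd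
    have hco : (p (m+1)).coeff (m+1) = (p (m+1)).leadingCoeff := by
      rw [Polynomial.leadingCoeff, hdeg]
    have hdeg2 : (q - C d * p (m+1)).natDegree ≤ m := by
      rw [Polynomial.natDegree_le_iff_coeff_eq_zero]
      intro N hN
      rcases eq_or_lt_of_le (Nat.succ_le_of_lt hN) with h | h
      · rw [Polynomial.coeff_sub, Polynomial.coeff_C_mul, ← h, hco, hd,
          div_mul_cancel₀ _ (hl (m+1)), sub_self]
      · rw [Polynomial.coeff_sub, Polynomial.coeff_C_mul,
          Polynomial.coeff_eq_zero_of_natDegree_lt (lt_of_le_of_lt hq h),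
          Polynomial.coeff_eq_zero_of_natDegree_lt (by rw [hdeg]; exact h),
          mul_zero, sub_self]
    obtain ⟨c, hc⟩ := IH _ hdeg2
    refine ⟨fun k => if k = m+1 then d else c k, ?_⟩
    rw [Finset.sum_range_succ]
    simp only []
    rw [if_pos trivial]
    have heq : ∑ k ∈ Finset.range (m+1), C (if k = m+1 then d else c k) * p k
        = ∑ k ∈ Finset.range (m+1), C (c k) * p k := by
      apply Finset.sum_congr rfl
      intro k hk
      rw [Finset.mem_range] at hk
      rw [if_neg (by omega)]
    rw [heq, ← hc]
    ring


section test
variable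
    (μ : Measure ℝ) [IsProbabilityMeasure μ]
    (p : ℕ → Polynomial ℝ)
    (hdeg : ∀ m, (p m).natDegree = m)
    (hlead : ∀ m, 0 < (p m).leadingCoeff)
    (horth : ∀ m l, ∫ x, (p m).eval x * (p l).eval x ∂μ = if m = l then 1 else 0)

include hdeg hlead horth in
lemma stmt8_p0 : ∀ t : ℝ, (p 0).eval t = 1 := by
  obtain ⟨b, hb⟩ := Polynomial.natDegree_eq_zero.mp (hdeg 0)
  have hl0 := hlead 0
  rw [← hb, leadingCoeff_C] at hl0
  have h00 := horth 0 0
  rw [if_pos rfl, ← hb] at h00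
  simp only [eval_C] at h00
  rw [integral_const] at h00
  simp at h00
  have : b = 1 := by nlinarith
  intro t; rw [← hb, this, eval_C]

include horth in
lemma stmt8_int : ∀ m l, Integrable (fun t => (p m).eval t * (p l).eval t) μ := by
  have hsq : ∀ m, Integrable (fun t => (p m).eval t * (p m).eval t) μ := by
    intro m
    by_contra h
    have := integral_undef h
    rw [horth m m, if_pos rfl] at this
    norm_num at this
  intro m l
  apply Integrable.mono' (g := fun t => ((p m).eval t * (p m).eval t + (p l).eval t * (p l).eval t)/2)
  · exact ((hsq m).add (hsq l)).div_const 2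
  · exact (((p m).continuous_aeval.mul (p l).continuous_aeval)).aestronglyMeasurable
  · filter_upwards with t
    rw [Real.norm_eq_abs]
    nlinarith [sq_nonneg (|(p m).eval t| - |(p l).eval t|), abs_mul ((p m).eval t) ((p l).eval t), sq_abs ((p m).eval t), sq_abs ((p l).eval t), abs_nonneg ((p m).eval t)]
end test

section test2
variable
    (μ : Measure ℝ) [IsProbabilityMeasure μ]
    (p : ℕ → Polynomial ℝ)
    (hdeg : ∀ m, (p m).natDegree = m)
    (hlead : ∀ m, 0 < (p m).leadingCoeff)
    (horth : ∀ m l, ∫ x, (p m).eval x * (p l).eval x ∂μ = if m = l then 1 else 0)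
    (n : ℕ)
    (J : Matrix (Fin (n + 1)) (Fin (n + 1)) ℝ)
    (hJ : ∀ i j : Fin (n + 1), J i j = ∫ x, x * (p i).eval x * (p j).eval x ∂μ)

include hdeg hlead horth hJ in
lemma stmt8_row : ∀ m : ℕ, (hm : m < n) → ∃ c : ℕ → ℝ,
    (∀ k : Fin (n+1), J ⟨m, by omega⟩ k = if (k:ℕ) < m+2 then c ↑k else 0) ∧
    0 < c (m+1) ∧
    (∀ t : ℝ, ∑ l ∈ Finset.range (m+2), c l * (p l).eval t = t * (p m).eval t) := by
  intro m hm
  have hnd : (Polynomial.X * p m).natDegree ≤ m + 1 := by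
    refine le_trans (Polynomial.natDegree_mul_le) ?_
    rw [Polynomial.natDegree_X, hdeg]
    omega
  obtain ⟨c, hc⟩ := stmt8_span p hdeg (fun m => (hlead m).ne') (m+1) _ hnd
  have heval : ∀ t : ℝ, ∑ l ∈ Finset.range (m+2), c l * (p l).eval t = t * (p m).eval t := by
    intro t
    have := congrArg (Polynomial.eval t) hc
    simp only [Polynomial.eval_mul, Polynomial.eval_X, Polynomial.eval_finset_sum,
      Polynomial.eval_C] at this
    exact this.symm
  refine ⟨c, ?_, ?_, heval⟩
  · intro k
    rw [hJ]
    have : (fun t : ℝ => t * (p m).eval t * (p ↑k).eval t)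
        = fun t => ∑ l ∈ Finset.range (m+2), c l * ((p l).eval t * (p ↑k).eval t) := by
      funext t
      rw [show (t : ℝ) * (p m).eval t * (p ↑k).eval t
          = (t * (p m).eval t) * (p ↑k).eval t by ring, ← heval t, Finset.sum_mul]
      apply Finset.sum_congr rfl
      intro l _
      ring
    rw [this, integral_finset_sum _ (fun l _ => ((stmt8_int μ p horth l ↑k).const_mul (c l)))]
    have : ∀ l ∈ Finset.range (m+2), ∫ t, c l * ((p l).eval t * (p ↑k).eval t) ∂μ
        = if l = ↑k then c l else 0 := by
      intro l _
      rw [integral_const_mul, horth]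
      split <;> simp
    rw [Finset.sum_congr rfl this, Finset.sum_ite_eq' (Finset.range (m+2)) (↑k : ℕ) c]
    simp [Finset.mem_range]
  · have hco := congrArg (fun q => Polynomial.coeff q (m+1)) hc
    simp only [Polynomial.coeff_X_mul, Polynomial.finset_sum_coeff, Polynomial.coeff_C_mul] at hco
    rw [Finset.sum_range_succ] at hco
    have hz : ∀ l ∈ Finset.range (m+1), c l * (p l).coeff (m+1) = 0 := by
      intro l hl
      rw [Finset.mem_range] at hl
      rw [Polynomial.coeff_eq_zero_of_natDegree_lt (by rw [hdeg]; omega), mul_zero]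
    rw [Finset.sum_eq_zero hz, zero_add] at hco
    have h1 : (p m).coeff m = (p m).leadingCoeff := by rw [Polynomial.leadingCoeff, hdeg]
    have h2 : (p (m+1)).coeff (m+1) = (p (m+1)).leadingCoeff := by
      rw [Polynomial.leadingCoeff, hdeg]
    rw [h1, h2] at hco
    have := hlead m
    have := hlead (m+1)
    nlinarith
end test2


section
variable
    (μ : Measure ℝ) [IsProbabilityMeasure μ]
    (p : ℕ → Polynomial ℝ)
    (hdeg : ∀ m, (p m).natDegree = m)
    (hlead : ∀ m, 0 < (p m).leadingCoeff)
    (horth : ∀ m l, ∫ x, (p m).eval x * (p l).eval x ∂μ = if m = l then 1 else 0)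
    (n : ℕ)
    (J : Matrix (Fin (n + 1)) (Fin (n + 1)) ℝ)
    (hJ : ∀ i j : Fin (n + 1), J i j = ∫ x, x * (p i).eval x * (p j).eval x ∂μ)

include μ hdeg hlead horth hJ in
theorem stmt8_main
    (lam : ℝ)
    (A : Matrix (Fin (n + 1)) (Fin (n + 1)) ℝ)
    (hA : A = J + lam • Matrix.single (Fin.last n) (Fin.last n) 1)
    (x : Fin (n + 1) → ℝ) (hx : Function.Injective x)
    (v : Fin (n + 1) → Fin (n + 1) → ℝ)
    (heig : ∀ j, A.mulVec (v j) = x j • v j)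
    (honv : ∀ j l, ∑ i, v j i * v l i = if j = l then 1 else 0)
    (μspec : Measure ℝ)
    (hμspec : μspec = ∑ j, ENNReal.ofReal ((v j 0) ^ 2) • Measure.dirac (x j)) :
    ∀ j, μspec {x j} =
      ENNReal.ofReal (1 / ∑ m ∈ Finset.range (n + 1), ((p m).eval (x j)) ^ 2) := by
  intro j
  have stmt8_p0e := stmt8_p0 μ p hdeg hlead horth
  have hr := stmt8_row μ p hdeg hlead horth n J hJ
  -- row equation for v j
  have stmt8_rowv : ∀ (m : ℕ) (hm : m < n),
      ∑ k : Fin (n+1), J ⟨m, by omega⟩ k * v j k = x j * v j ⟨m, by omega⟩ := by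
    intro m hm
    have hAe : ∀ k, A ⟨m, by omega⟩ k = J ⟨m, by omega⟩ k := by
      intro k
      rw [hA]
      simp only [Matrix.add_apply, Matrix.smul_apply, smul_eq_mul]
      rw [Matrix.single_apply_of_ne]
      · ring
      · rintro ⟨h1, -⟩
        have := congrArg Fin.val h1
        simp [Fin.last] at this
        omega
    have h := congrFun (heig j) ⟨m, by omega⟩
    simp only [Matrix.mulVec, dotProduct, Pi.smul_apply, smul_eq_mul] at h
    rw [Finset.sum_congr rfl (fun k _ => by rw [hAe k])] at h
    exact h
  -- eigenvector components via recurrence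
  have hkey : ∀ m : ℕ, ∀ hm : m < n+1, v j ⟨m, hm⟩ = v j 0 * (p m).eval (x j) := by
    intro m
    induction m using Nat.strong_induction_on with
    | _ m IH =>
      cases m with
      | zero =>
        intro hm
        rw [stmt8_p0e, mul_one]
        rfl
      | succ m =>
        intro hm
        have hm' : m < n := by omega
        obtain ⟨c, hcJ, hcpos, hcev⟩ := hr m hm'
        have hv := stmt8_rowv m hm'
        set f : ℕ → ℝ := fun l =>
          (if l < m+2 then c l else 0) * (if h : l < n+1 then v j ⟨l, h⟩ else 0) with hf
        have h1 : ∑ k : Fin (n+1), J ⟨m, by omega⟩ k * v j k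
            = ∑ l ∈ Finset.range (n+1), f l := by
          rw [← Fin.sum_univ_eq_sum_range f (n+1)]
          apply Finset.sum_congr rfl
          intro k _
          rw [hcJ k, hf]
          simp only []
          rw [dif_pos k.isLt, Fin.eta]
        have h2 : ∑ l ∈ Finset.range (n+1), f l = ∑ l ∈ Finset.range (m+2), f l := by
          refine (Finset.sum_subset (Finset.range_subset_range.mpr (by omega)) ?_).symm
          intro l _ hl
          rw [Finset.mem_range, not_lt] at hl
          rw [hf]
          simp only []
          rw [if_neg (by omega), zero_mul]
        have h3 : ∑ l ∈ Finset.range (m+2), f l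
            = (∑ l ∈ Finset.range (m+1), c l * (v j 0 * (p l).eval (x j)))
              + c (m+1) * v j ⟨m+1, hm⟩ := by
          rw [Finset.sum_range_succ]
          congr 1
          · apply Finset.sum_congr rfl
            intro l hl
            rw [Finset.mem_range] at hl
            rw [hf]
            simp only []
            rw [if_pos (by omega), dif_pos (by omega : l < n+1), IH l (by omega) (by omega)]
          · rw [hf]
            simp only []
            rw [if_pos (by omega), dif_pos hm]
        have h4 : (∑ l ∈ Finset.range (m+1), c l * (v j 0 * (p l).eval (x j)))
              + c (m+1) * (v j 0 * (p (m+1)).eval (x j))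
            = x j * (v j 0 * (p m).eval (x j)) := by
          have e1 : ∀ l : ℕ, c l * (v j 0 * (p l).eval (x j))
              = v j 0 * (c l * (p l).eval (x j)) := fun l => by ring
          simp only [e1]
          rw [← Finset.sum_range_succ (fun l => v j 0 * (c l * (p l).eval (x j))) (m+1),
            ← Finset.mul_sum, hcev]
          ring
        have h5 : x j * v j ⟨m, by omega⟩ = x j * (v j 0 * (p m).eval (x j)) := by
          rw [IH m (by omega) (by omega)]
        rw [h1, h2, h3, h5] at hv
        have h6 : c (m+1) * v j ⟨m+1, hm⟩ = c (m+1) * (v j 0 * (p (m+1)).eval (x j)) := by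
          linarith
        exact mul_left_cancel₀ hcpos.ne' h6
  -- normalization
  have hnv := honv j j
  rw [if_pos rfl] at hnv
  have hsum : ∑ i : Fin (n+1), v j i * v j i
      = (v j 0)^2 * ∑ m ∈ Finset.range (n+1), ((p m).eval (x j))^2 := by
    rw [Finset.mul_sum, ← Fin.sum_univ_eq_sum_range
      (fun l => (v j 0)^2 * ((p l).eval (x j))^2) (n+1)]
    apply Finset.sum_congr rfl
    intro i _
    rw [show v j i = v j ⟨↑i, i.isLt⟩ by rw [Fin.eta], hkey ↑i i.isLt]
    ring
  rw [hsum] at hnv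
  set S := ∑ m ∈ Finset.range (n + 1), ((p m).eval (x j)) ^ 2 with hSdef
  have hS0 : S ≠ 0 := by
    intro h
    rw [h, mul_zero] at hnv
    norm_num at hnv
  have hv0 : (v j 0)^2 = 1 / S := by
    field_simp
    linarith
  -- measure computation
  rw [hμspec]
  rw [show ((∑ l, ENNReal.ofReal ((v l 0) ^ 2) • Measure.dirac (x l)) : Measure ℝ) {x j}
      = ∑ l, (ENNReal.ofReal ((v l 0) ^ 2) • Measure.dirac (x l)) {x j} by
    rw [MeasureTheory.Measure.coe_finset_sum]; simp]
  have hterm : ∀ l : Fin (n+1),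
      (ENNReal.ofReal ((v l 0) ^ 2) • Measure.dirac (x l)) {x j}
      = if l = j then ENNReal.ofReal ((v l 0) ^ 2) else 0 := by
    intro l
    rw [Measure.smul_apply, MeasureTheory.Measure.dirac_apply' _ (measurableSet_singleton _)]
    by_cases h : l = j
    · subst h
      simp [Set.indicator_apply]
    · rw [if_neg h]
      have hne : x l ∉ ({x j} : Set ℝ) := by
        simp only [Set.mem_singleton_iff]
        exact fun he => h (hx he)
      rw [Set.indicator_of_notMem hne, smul_zero]
  rw [Finset.sum_congr rfl (fun l _ => hterm l), Finset.sum_ite_eq' Finset.univ j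
    (fun l => ENNReal.ofReal ((v l 0) ^ 2)), if_pos (Finset.mem_univ j), hv0]
end


/-- For a probability measure `μ` on `ℝ` with infinite compact support,
orthonormal polynomials `p m` and CD kernel `K_n`, let `A_λ` be the top-left
`(n+1)×(n+1)` block of the Jacobi matrix of `μ` (whose `(i,j)` entry is
`∫ x p_i(x) p_j(x) dμ`) with `λ` added to its bottom-right entry, and let
`μ_{n+1,λ} = ∑_j ⟨e_1, v_j⟩² δ_{x_j}` be its spectral measure for `e_1`,
where `x_j` are its (distinct) eigenvalues with orthonormal eigenvectors
`v_j`. Then `μ_{n+1,λ}({x_j}) = 1 / K_n(x_j, x_j; μ)` for each `j`. -/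
theorem stmt_8
    (μ : Measure ℝ) [IsProbabilityMeasure μ]
    (hcomp : IsCompact (measSupport μ))
    (hinf : (measSupport μ).Infinite)
    (p : ℕ → Polynomial ℝ)
    (hdeg : ∀ m, (p m).natDegree = m)
    (hlead : ∀ m, 0 < (p m).leadingCoeff)
    (horth : ∀ m l, ∫ x, (p m).eval x * (p l).eval x ∂μ = if m = l then 1 else 0)
    (n : ℕ) (lam : ℝ)
    (J : Matrix (Fin (n + 1)) (Fin (n + 1)) ℝ)
    (hJ : ∀ i j : Fin (n + 1), J i j = ∫ x, x * (p i).eval x * (p j).eval x ∂μ)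
    (A : Matrix (Fin (n + 1)) (Fin (n + 1)) ℝ)
    (hA : A = J + lam • Matrix.single (Fin.last n) (Fin.last n) 1)
    (x : Fin (n + 1) → ℝ) (hx : Function.Injective x)
    (v : Fin (n + 1) → Fin (n + 1) → ℝ)
    (heig : ∀ j, A.mulVec (v j) = x j • v j)
    (honv : ∀ j l, ∑ i, v j i * v l i = if j = l then 1 else 0)
    (μspec : Measure ℝ)
    (hμspec : μspec = ∑ j, ENNReal.ofReal ((v j 0) ^ 2) • Measure.dirac (x j)) :
    ∀ j, μspec {x j} =
      ENNReal.ofReal (1 / ∑ m ∈ Finset.range (n + 1), ((p m).eval (x j)) ^ 2) :=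
  stmt8_main μ p hdeg hlead horth n J hJ lam A hA x hx v heig honv μspec hμspec
end

section
/- Let μ be a probability measure on ℝ with infinite support contained in [−M, M], with CD kernel K_n(x,y;μ) = Σ_{j=0}^n p_j(x)p_j(y). Then for every k ∈ ℕ, every n ≥ k, and every real x with |x| > M, K_{n−k}(x, x; μ) / K_n(x, x; μ) ≤ (M/|x|)^{2k}. -/
open MeasureTheory Polynomial Filter
open scoped ENNReal Real

lemma measSupport_compl_null (μ : Measure ℝ) : μ (measSupport μ)ᶜ = 0 := by
  apply measure_null_of_locally_null
  intro y hy
  simp only [measSupport, Set.mem_compl_iff, Set.mem_setOf_eq, not_forall] at hy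
  obtain ⟨U, hU, hyU, hμU⟩ := hy
  exact ⟨U, mem_nhdsWithin_of_mem_nhds (hU.mem_nhds hyU), not_not.mp hμU⟩

lemma poly_integrable (μ : Measure ℝ) [IsFiniteMeasure μ] {M : ℝ}
    (hae : ∀ᵐ t ∂μ, t ∈ Set.Icc (-M) M) (q : Polynomial ℝ) :
    Integrable (fun t => q.eval t) μ := by
  obtain ⟨C, hC⟩ := isCompact_Icc.exists_bound_of_continuousOn
    (f := fun t => q.eval t) q.continuous.continuousOn
  exact Integrable.mono' (integrable_const C) q.continuous.aestronglyMeasurable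
    (hae.mono fun t ht => hC t ht)

lemma span_poly (p : ℕ → Polynomial ℝ) (hdeg : ∀ m, (p m).natDegree = m)
    (hlead : ∀ m, (p m).leadingCoeff ≠ 0) :
    ∀ n (q : Polynomial ℝ), q.natDegree ≤ n →
      ∃ d : ℕ → ℝ, q = ∑ j ∈ Finset.range (n+1), Polynomial.C (d j) * p j := by
  intro n
  induction n with
  | zero =>
    intro q hq
    set a := (p 0).coeff 0 with ha'
    have h0 : p 0 = Polynomial.C a := eq_C_of_natDegree_le_zero (le_of_eq (hdeg 0))
    have ha : a ≠ 0 := by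
      intro h
      apply hlead 0
      rw [← Polynomial.coeff_natDegree, hdeg 0, ← ha', h]
    refine ⟨fun _ => q.coeff 0 / a, ?_⟩
    rw [Finset.sum_range_one, h0, ← Polynomial.C_mul, div_mul_cancel₀ _ ha]
    exact eq_C_of_natDegree_le_zero hq
  | succ n ih =>
    intro q hq
    set L : ℝ := (p (n+1)).leadingCoeff with hL
    set c : ℝ := q.coeff (n+1) / L with hc
    set q' : Polynomial ℝ := q - Polynomial.C c * p (n+1) with hq'
    have hcoef : (p (n+1)).coeff (n+1) = L := by
      rw [hL, ← Polynomial.coeff_natDegree, hdeg (n+1)]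
    have hq'deg : q'.natDegree ≤ n := by
      rw [natDegree_le_iff_coeff_eq_zero]
      intro N hN
      rcases eq_or_lt_of_le (Nat.succ_le_of_lt hN) with h | h
      · rw [hq', Polynomial.coeff_sub, Polynomial.coeff_C_mul, ← h, hcoef, hc,
          div_mul_cancel₀ _ (hlead (n+1)), sub_self]
      · rw [hq', Polynomial.coeff_sub, Polynomial.coeff_C_mul,
          Polynomial.coeff_eq_zero_of_natDegree_lt (lt_of_le_of_lt hq h),
          Polynomial.coeff_eq_zero_of_natDegree_lt (by rw [hdeg (n+1)]; exact h),
          mul_zero, sub_self]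
    obtain ⟨d, hd⟩ := ih q' hq'deg
    refine ⟨Function.update d (n+1) c, ?_⟩
    rw [Finset.sum_range_succ, Function.update_self]
    have hsum : ∑ j ∈ Finset.range (n+1), Polynomial.C (Function.update d (n+1) c j) * p j
        = ∑ j ∈ Finset.range (n+1), Polynomial.C (d j) * p j := by
      refine Finset.sum_congr rfl fun j hj => ?_
      rw [Function.update_of_ne (Nat.ne_of_lt (Finset.mem_range.mp hj))]
    rw [hsum, ← hd, hq']
    ring

lemma integral_sq_expand (μ : Measure ℝ) (p : ℕ → Polynomial ℝ)
    (horth : ∀ m l, ∫ x, (p m).eval x * (p l).eval x ∂μ = if m = l then 1 else 0)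
    (hint : ∀ q : Polynomial ℝ, Integrable (fun t => q.eval t) μ)
    (d : ℕ → ℝ) (s : Finset ℕ) :
    ∫ t, (∑ j ∈ s, d j * (p j).eval t)^2 ∂μ = ∑ j ∈ s, (d j)^2 := by
  have hint2 : ∀ j l : ℕ,
      Integrable (fun t => (d j * (p j).eval t) * (d l * (p l).eval t)) μ := by
    intro j l
    have h := (hint (p j * p l)).const_mul (d j * d l)
    have heq : (fun t => (d j * (p j).eval t) * (d l * (p l).eval t))
        = fun t => (d j * d l) * (p j * p l).eval t := by
      funext t; simp only [Polynomial.eval_mul]; ring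
    rw [heq]; exact h
  calc ∫ t, (∑ j ∈ s, d j * (p j).eval t)^2 ∂μ
      = ∫ t, ∑ j ∈ s, ∑ l ∈ s, (d j * (p j).eval t) * (d l * (p l).eval t) ∂μ := by
        congr 1; funext t; rw [sq, Finset.sum_mul_sum]
    _ = ∑ j ∈ s, ∑ l ∈ s, ∫ t, (d j * (p j).eval t) * (d l * (p l).eval t) ∂μ := by
        rw [integral_finset_sum _ fun j _ => integrable_finset_sum _ fun l _ => hint2 j l]
        exact Finset.sum_congr rfl fun j _ => integral_finset_sum _ fun l _ => hint2 j l
    _ = ∑ j ∈ s, ∑ l ∈ s, (d j * d l) * (if j = l then (1:ℝ) else 0) := by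
        refine Finset.sum_congr rfl fun j _ => Finset.sum_congr rfl fun l _ => ?_
        rw [← horth j l, ← integral_const_mul]
        congr 1; funext t; ring
    _ = ∑ j ∈ s, (d j)^2 := by
        refine Finset.sum_congr rfl fun j hj => ?_
        simp [mul_ite, Finset.sum_ite_eq, hj, sq]

/-- For `μ` a probability measure on `ℝ` with infinite support in `[-M, M]`
and CD kernel `K_n(x,x) = ∑_{j≤n} p_j(x)²`, for every `k`, every `n ≥ k`, and
every real `x` with `|x| > M`, one has
`K_{n-k}(x,x;μ)/K_n(x,x;μ) ≤ (M/|x|)^{2k}`. -/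
theorem stmt_14
    (μ : Measure ℝ) [IsProbabilityMeasure μ] (M : ℝ)
    (hsupp : measSupport μ ⊆ Set.Icc (-M) M)
    (hinf : (measSupport μ).Infinite)
    (p : ℕ → Polynomial ℝ)
    (hdeg : ∀ m, (p m).natDegree = m)
    (hlead : ∀ m, 0 < (p m).leadingCoeff)
    (horth : ∀ m l, ∫ x, (p m).eval x * (p l).eval x ∂μ = if m = l then 1 else 0)
    (k n : ℕ) (hkn : k ≤ n) (x : ℝ) (hx : M < |x|) :
    (∑ j ∈ Finset.range (n - k + 1), ((p j).eval x) ^ 2) /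
        (∑ j ∈ Finset.range (n + 1), ((p j).eval x) ^ 2) ≤
      (M / |x|) ^ (2 * k) := by
  have hML : ∀ m, (p m).leadingCoeff ≠ 0 := fun m => (hlead m).ne'
  have hae : ∀ᵐ t ∂μ, t ∈ Set.Icc (-M) M := by
    rw [ae_iff]
    refine measure_mono_null (fun t ht hmem => ht (hsupp hmem)) (measSupport_compl_null μ)
  have hint : ∀ q : Polynomial ℝ, Integrable (fun t => q.eval t) μ :=
    poly_integrable μ hae
  have hM0 : 0 ≤ M := by
    obtain ⟨t, ht⟩ := hinf.nonempty
    have h := hsupp ht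
    have h1 := h.1; have h2 := h.2
    simp only [Set.mem_Icc] at h
    linarith [h.1, h.2]
  have hx0 : (0:ℝ) < |x| := lt_of_le_of_lt hM0 hx
  have hxne : x ≠ 0 := abs_pos.mp hx0
  set S := ∑ j ∈ Finset.range (n - k + 1), ((p j).eval x) ^ 2 with hSdef
  set Kn := ∑ j ∈ Finset.range (n + 1), ((p j).eval x) ^ 2 with hKdef
  -- p 0 evaluates to its (positive) leading coefficient
  have hp0 : (p 0).eval x = (p 0).leadingCoeff := by
    conv_lhs => rw [eq_C_of_natDegree_le_zero (le_of_eq (hdeg 0))]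
    rw [Polynomial.eval_C, ← Polynomial.coeff_natDegree, hdeg 0]
  have hp0pos : 0 < ((p 0).eval x)^2 := by
    rw [hp0]; exact pow_pos (hlead 0) 2
  have hS0 : 0 < S :=
    lt_of_lt_of_le hp0pos (Finset.single_le_sum (f := fun j => ((p j).eval x)^2)
      (fun i _ => sq_nonneg _) (Finset.mem_range.mpr (Nat.succ_pos _)))
  have hK0 : 0 < Kn :=
    lt_of_lt_of_le hp0pos (Finset.single_le_sum (f := fun j => ((p j).eval x)^2)
      (fun i _ => sq_nonneg _) (Finset.mem_range.mpr (Nat.succ_pos _)))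
  set P : Polynomial ℝ := ∑ j ∈ Finset.range (n - k + 1), Polynomial.C ((p j).eval x) * p j
    with hPdef
  have hPev : ∀ t, P.eval t = ∑ j ∈ Finset.range (n - k + 1), (p j).eval x * (p j).eval t := by
    intro t; simp [hPdef, Polynomial.eval_finset_sum]
  set R : Polynomial ℝ := Polynomial.X ^ k * P with hRdef
  have hPdeg : P.natDegree ≤ n - k := by
    refine Polynomial.natDegree_sum_le_of_forall_le _ _ fun j hj => ?_
    calc (Polynomial.C ((p j).eval x) * p j).natDegree
        ≤ (p j).natDegree := Polynomial.natDegree_C_mul_le _ _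
      _ = j := hdeg j
      _ ≤ n - k := Nat.lt_succ_iff.mp (Finset.mem_range.mp hj)
  have hRdeg : R.natDegree ≤ n := by
    calc R.natDegree ≤ (Polynomial.X ^ k : Polynomial ℝ).natDegree + P.natDegree :=
          Polynomial.natDegree_mul_le
      _ ≤ k + (n - k) := by
          rw [Polynomial.natDegree_X_pow]
          exact Nat.add_le_add_left hPdeg k
      _ = n := Nat.add_sub_cancel' hkn
  obtain ⟨d, hd⟩ := span_poly p hdeg hML n R hRdeg
  have hRev : ∀ t, R.eval t = ∑ j ∈ Finset.range (n + 1), d j * (p j).eval t := by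
    intro t; rw [hd]; simp [Polynomial.eval_finset_sum]
  have hRx : R.eval x = x ^ k * S := by
    rw [hRdef, Polynomial.eval_mul, Polynomial.eval_pow, Polynomial.eval_X, hPev]
    congr 1
    exact Finset.sum_congr rfl fun j _ => (sq _).symm
  have hIR : ∫ t, (R.eval t)^2 ∂μ = ∑ j ∈ Finset.range (n + 1), (d j)^2 := by
    have : (fun t => (R.eval t)^2)
        = fun t => (∑ j ∈ Finset.range (n + 1), d j * (p j).eval t)^2 :=
      funext fun t => by rw [hRev]
    rw [this, integral_sq_expand μ p horth hint]
  have hIP : ∫ t, (P.eval t)^2 ∂μ = S := by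
    have : (fun t => (P.eval t)^2)
        = fun t => (∑ j ∈ Finset.range (n - k + 1), (p j).eval x * (p j).eval t)^2 :=
      funext fun t => by rw [hPev]
    rw [this, integral_sq_expand μ p horth hint]
  -- integrability of the squares
  have hintR : Integrable (fun t => (R.eval t)^2) μ := by
    have h := hint (R^2)
    have heq : (fun t => (R^2).eval t) = fun t => (R.eval t)^2 := by
      funext t; rw [Polynomial.eval_pow]
    rwa [heq] at h
  have hintP : Integrable (fun t => M^(2*k) * (P.eval t)^2) μ := by
    have h := (hint (P^2)).const_mul (M^(2*k))
    have heq : (fun t => M^(2*k) * (P^2).eval t) = fun t => M^(2*k) * (P.eval t)^2 := by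
      funext t; rw [Polynomial.eval_pow]
    rwa [heq] at h
  have hcomp : ∫ t, (R.eval t)^2 ∂μ ≤ M^(2*k) * S := by
    have hmono : ∫ t, (R.eval t)^2 ∂μ ≤ ∫ t, M^(2*k) * (P.eval t)^2 ∂μ := by
      refine integral_mono_ae hintR hintP (hae.mono fun t ht => ?_)
      show R.eval t ^ 2 ≤ M ^ (2 * k) * P.eval t ^ 2
      have habs : |t| ≤ M := abs_le.mpr ⟨ht.1, ht.2⟩
      have ht2 : t^(2*k) ≤ M^(2*k) := by
        calc t^(2*k) = |t|^(2*k) := ((even_two_mul k).pow_abs t).symm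
          _ ≤ M^(2*k) := pow_le_pow_left₀ (abs_nonneg t) habs _
      have hval : (R.eval t)^2 = t^(2*k) * (P.eval t)^2 := by
        rw [hRdef, Polynomial.eval_mul, Polynomial.eval_pow, Polynomial.eval_X,
          mul_pow, ← pow_mul, mul_comm k 2]
      rw [hval]
      exact mul_le_mul_of_nonneg_right ht2 (sq_nonneg _)
    rw [integral_const_mul, hIP] at hmono
    exact hmono
  have hCS : (x ^ k * S)^2 ≤ (∑ j ∈ Finset.range (n + 1), (d j)^2) * Kn := by
    rw [← hRx, hRev x]
    exact Finset.sum_mul_sq_le_sq_mul_sq _ _ _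
  have hkey : x^(2*k) * S^2 ≤ M^(2*k) * S * Kn := by
    have h1 : (x ^ k * S)^2 = x^(2*k) * S^2 := by rw [mul_pow, ← pow_mul, mul_comm k 2]
    rw [h1, ← hIR] at hCS
    calc x^(2*k) * S^2 ≤ (∫ t, (R.eval t)^2 ∂μ) * Kn := hCS
      _ ≤ M^(2*k) * S * Kn := mul_le_mul_of_nonneg_right hcomp hK0.le
  have hx2k : (0:ℝ) < x^(2*k) := by
    calc (0:ℝ) < |x|^(2*k) := pow_pos hx0 _
      _ = x^(2*k) := (even_two_mul k).pow_abs x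
  have hfinal : S * x^(2*k) ≤ M^(2*k) * Kn := by nlinarith [hS0, hK0]
  rw [div_pow, (even_two_mul k).pow_abs x, div_le_div_iff₀ hK0 hx2k]
  linarith [hfinal]
end
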